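/- Let (P, ≤) be a partial order with greatest element 1 and κ a cardinal. If INC has a winning strategy in the completeness game G(P, κ), then P is not strongly <κ-distributive. -/

import Mathlib

universe u v

/-- `D` is open (downward closed) and dense in the partial order `P`. -/
def OpenDense {P : Type u} [Preorder P] (D : Set P) : Prop :=
  (∀ p ∈ D, ∀ q, q ≤ p → q ∈ D) ∧ ∀ p : P, ∃ q, q ≤ p ∧ q ∈ D

/-- `P` is strongly `<κ`-distributive: for every `κ`-sequence of open dense sets and
every `p` there is a descending sequence (a thread) below `p` meeting them in order. -/
def StronglyDistrib (κ : Cardinal.{v}) (P : Type u) [Preorder P] : Prop :=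
  ∀ D : Ordinal.{v} → Set P, (∀ α < κ.ord, OpenDense (D α)) → ∀ p : P,
    ∃ f : Ordinal.{v} → P, f 0 ≤ p ∧
      (∀ β α, β ≤ α → α < κ.ord → f α ≤ f β) ∧
      ∀ α < κ.ord, f α ∈ D α

/-- `P` is `<κ`-distributive: intersections of fewer than `κ` open dense sets are dense. -/
def DistribLt (κ : Cardinal.{v}) (P : Type u) [Preorder P] : Prop :=
  ∀ γ < κ.ord, ∀ D : Ordinal.{v} → Set P, (∀ α < γ, OpenDense (D α)) →
    ∀ p : P, ∃ q, q ≤ p ∧ ∀ α < γ, q ∈ D α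

/-- An ordinal is odd if it equals `γ + (2n+1)` with `γ` zero or a limit ordinal. -/
def OrdOdd (α : Ordinal.{v}) : Prop :=
  ∃ (γ : Ordinal.{v}) (n : ℕ), (γ = 0 ∨ Order.IsSuccLimit γ) ∧ α = γ + ((2 * n + 1 : ℕ) : Ordinal.{v})

/-- An ordinal is even (this includes `0` and all limit ordinals) if it equals
`γ + 2n` with `γ` zero or a limit ordinal. -/
def OrdEven (α : Ordinal.{v}) : Prop :=
  ∃ (γ : Ordinal.{v}) (n : ℕ), (γ = 0 ∨ Order.IsSuccLimit γ) ∧ α = γ + ((2 * n : ℕ) : Ordinal.{v})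

/-- A strategy for the player INC in the completeness game: given the sequence of
previous moves (of odd length), it produces INC's next move. (Only its values on
descending sequences of odd length matter.) -/
def IncStrategy.{w, x} (P : Type w) : Type (max w (x + 1)) :=
  (α : Ordinal.{x}) → ((β : Ordinal.{x}) → β < α → P) → P

/-- A strategy for the player COM in the completeness game: given the sequence of
previous moves (of even or limit length), it produces COM's next move. -/
def ComStrategy.{w, x} (P : Type w) : Type (max w (x + 1)) :=
  (α : Ordinal.{x}) → ((β : Ordinal.{x}) → β < α → P) → P

/-- The partial play `s` of length `α` is a play of the completeness game in which
INC has followed the strategy `σ`: it starts with `1 = ⊤`, is descending, and the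
move at every odd stage is given by `σ`. -/
def IncFollows {P : Type u} [Preorder P] [OrderTop P] (σ : IncStrategy.{u, v} P)
    (α : Ordinal.{v}) (s : (β : Ordinal.{v}) → β < α → P) : Prop :=
  (∀ h0 : (0 : Ordinal.{v}) < α, s 0 h0 = ⊤) ∧
  (∀ β γ (hβγ : β ≤ γ) (hγ : γ < α), s γ hγ ≤ s β (lt_of_le_of_lt hβγ hγ)) ∧
  (∀ β (hβ : β < α), OrdOdd β → s β hβ = σ β (fun γ hγ => s γ (hγ.trans hβ)))

/-- `σ` is a winning strategy for INC in the completeness game `G(P, δ)`: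
(i) against any partial play of odd length in which INC has followed `σ`, the move
produced by `σ` is a legal move (a lower bound of the previous moves), and
(ii) there is no full descending play of length `δ` in which INC follows `σ`
(i.e. COM eventually gets stuck before stage `δ`). -/
def IncWinning {P : Type u} [Preorder P] [OrderTop P] (σ : IncStrategy.{u, v} P)
    (δ : Ordinal.{v}) : Prop :=
  (∀ α, α < δ → OrdOdd α → ∀ s : (β : Ordinal.{v}) → β < α → P,
      IncFollows σ α s → ∀ β (hβ : β < α), σ α s ≤ s β hβ) ∧
  ¬ ∃ f : Ordinal.{v} → P, f 0 = ⊤ ∧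
      (∀ β γ, β ≤ γ → γ < δ → f γ ≤ f β) ∧
      ∀ α, α < δ → OrdOdd α → f α = σ α (fun β _ => f β)

/-- `τ` is a winning strategy for COM in the completeness game `G(P, δ)`: it plays
`1 = ⊤` at stage `0`, and against any descending partial play of even or limit length
`< δ` in which COM has followed `τ` at all even and limit stages, the move produced by
`τ` is a legal move (a lower bound of the previous moves). -/
def ComWinning {P : Type u} [Preorder P] [OrderTop P] (τ : ComStrategy.{u, v} P)
    (δ : Ordinal.{v}) : Prop :=
  (∀ s : (β : Ordinal.{v}) → β < (0 : Ordinal.{v}) → P, τ 0 s = ⊤) ∧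
  ∀ α, α < δ → OrdEven α → ∀ s : (β : Ordinal.{v}) → β < α → P,
    (∀ β γ (hβγ : β ≤ γ) (hγ : γ < α), s γ hγ ≤ s β (lt_of_le_of_lt hβγ hγ)) →
    (∀ β (hβ : β < α), OrdEven β → s β hβ = τ β (fun γ hγ => s γ (hγ.trans hβ))) →
    ∀ β (hβ : β < α), τ α s ≤ s β hβ

open Ordinal

/-! ### Parity lemmas -/

lemma ordOdd_one : OrdOdd (1 : Ordinal.{v}) :=
  ⟨0, 0, Or.inl rfl, by norm_num⟩

lemma OrdOdd.add_two {x : Ordinal.{v}} (h : OrdOdd x) : OrdOdd (x + 2) := by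
  obtain ⟨γ, n, hγ, rfl⟩ := h
  refine ⟨γ, n + 1, hγ, ?_⟩
  have hc : ((2 * n + 1 : ℕ) : Ordinal) + 2 = ((2 * (n + 1) + 1 : ℕ) : Ordinal) := by
    have : (2 * (n + 1) + 1 : ℕ) = (2 * n + 1) + 2 := by omega
    rw [this]
    push_cast
    rfl
  rw [add_assoc, hc]

lemma ordOdd_succ_of_limit {x : Ordinal.{v}} (h : Order.IsSuccLimit x) : OrdOdd (x + 1) :=
  ⟨x, 0, Or.inr h, by norm_num⟩

lemma OrdOdd.ne_zero' {x : Ordinal.{v}} (h : OrdOdd x) : x ≠ 0 := by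
  obtain ⟨γ, n, hγ, rfl⟩ := h
  intro h0
  rw [Ordinal.add_eq_zero_iff] at h0
  have h2 : ((2 * n + 1 : ℕ) : Ordinal) = ((0 : ℕ) : Ordinal) := by
    rw [h0.2]; norm_num
  have := Nat.cast_injective h2
  omega

lemma OrdOdd.isSucc' {x : Ordinal.{v}} (h : OrdOdd x) : ∃ y, x = y + 1 := by
  obtain ⟨γ, n, hγ, rfl⟩ := h
  refine ⟨γ + ((2 * n : ℕ) : Ordinal), ?_⟩
  have hc : ((2 * n + 1 : ℕ) : Ordinal) = ((2 * n : ℕ) : Ordinal) + 1 := by push_cast; rfl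
  rw [add_assoc, hc]

lemma not_ordOdd_limit {x : Ordinal.{v}} (h : Order.IsSuccLimit x) : ¬ OrdOdd x := by
  intro ho
  obtain ⟨y, rfl⟩ := ho.isSucc'
  have h2 := h.succ_lt (lt_add_one y)
  rw [← Ordinal.add_one_eq_succ] at h2
  exact absurd h2 (lt_irrefl _)

lemma not_ordOdd_zero : ¬ OrdOdd (0 : Ordinal.{v}) := fun h => h.ne_zero' rfl

lemma limit_mod_omega {γ : Ordinal.{v}} (h : γ = 0 ∨ Order.IsSuccLimit γ) : γ % ω = 0 := by
  rcases h with rfl | h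
  · simp
  · have hlt : γ % ω < ω := Ordinal.mod_lt _ omega0_ne_zero
    obtain ⟨n, hn⟩ := Ordinal.lt_omega0.mp hlt
    rcases n with _ | m
    · simpa using hn
    · exfalso
      have hd : ω * (γ / ω) + ((m + 1 : ℕ) : Ordinal) = γ := by
        rw [← hn]; exact Ordinal.div_add_mod γ ω
      have hd2 : (ω * (γ / ω) + (m : Ordinal)) + 1 = γ := by
        rw [add_assoc]
        conv_rhs => rw [← hd]
        norm_cast
      have hlt2 : ω * (γ / ω) + (m : Ordinal) < γ := by
        conv_rhs => rw [← hd2]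
        exact lt_add_one _
      have h2 := h.succ_lt hlt2
      rw [← Ordinal.add_one_eq_succ, hd2] at h2
      exact absurd h2 (lt_irrefl _)

lemma add_nat_mod_omega {γ : Ordinal.{v}} (h : γ = 0 ∨ Order.IsSuccLimit γ) (n : ℕ) :
    (γ + (n : Ordinal)) % ω = (n : Ordinal) := by
  have hγ : ω * (γ / ω) = γ := by
    have hd : ω * (γ / ω) + γ % ω = γ := Ordinal.div_add_mod γ ω
    rw [limit_mod_omega h, add_zero] at hd
    exact hd
  calc (γ + (n : Ordinal)) % ω = (ω * (γ / ω) + (n : Ordinal)) % ω := by rw [hγ]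
    _ = (n : Ordinal) % ω := Ordinal.mul_add_mod_self _ _ _
    _ = (n : Ordinal) := Ordinal.mod_eq_of_lt (Ordinal.nat_lt_omega0 n)

lemma OrdOdd.not_succ {x : Ordinal.{v}} (h : OrdOdd x) : ¬ OrdOdd (x + 1) := by
  obtain ⟨γ, n, hγ, rfl⟩ := h
  intro h2
  obtain ⟨γ', m, hγ', he⟩ := h2
  have h3 : (γ + ((2 * n + 2 : ℕ) : Ordinal)) = γ' + ((2 * m + 1 : ℕ) : Ordinal) := by
    rw [← he, add_assoc]
    norm_cast
  have h4 := congrArg (· % ω) h3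
  rw [add_nat_mod_omega hγ, add_nat_mod_omega hγ'] at h4
  have h5 : (2 * n + 2 : ℕ) = 2 * m + 1 := Nat.cast_injective h4
  omega

/-! ### The length bookkeeping function `lix` (index of the last entry of level-`α` plays) -/

noncomputable def lix : Ordinal.{v} → Ordinal.{v} :=
  fun α => Ordinal.limitRecOn α 1 (fun _ ih => ih + 2)
    (fun o _ IH => Ordinal.bsup.{v, v} o (fun γ h => IH γ h + 1) + 1)

@[simp] lemma lix_zero : lix (0 : Ordinal.{v}) = 1 := Ordinal.limitRecOn_zero _ _ _

lemma lix_succ (α : Ordinal.{v}) : lix (α + 1) = lix α + 2 := by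
  rw [lix, Ordinal.add_one_eq_succ, Ordinal.limitRecOn_succ]
  rfl

noncomputable def lixSup (o : Ordinal.{v}) : Ordinal.{v} :=
  Ordinal.bsup.{v, v} o (fun γ _ => lix γ + 1)

lemma lix_limit {o : Ordinal.{v}} (h : Order.IsSuccLimit o) : lix o = lixSup o + 1 := by
  rw [lix, Ordinal.limitRecOn_limit _ _ _ _ h]
  rfl

lemma lix_strictMono : ∀ {β α : Ordinal.{v}}, β < α → lix β < lix α := by
  intro β α
  induction α using Ordinal.induction with
  | h α IH =>
    intro hβα
    rcases Ordinal.zero_or_succ_or_isSuccLimit α with rfl | ⟨α', rfl⟩ | hlim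
    · exact absurd hβα not_lt_zero
    · rw [← Ordinal.add_one_eq_succ] at *
      rw [lix_succ]
      have hβ' : β ≤ α' := by
        rw [Ordinal.add_one_eq_succ] at hβα
        exact Order.lt_succ_iff.mp hβα
      rcases lt_or_eq_of_le hβ' with h1 | rfl
      · exact lt_trans (IH α' (lt_add_one α') h1) (by
          have : lix α' < lix α' + 2 := by
            have : (0:Ordinal) < 2 := by norm_num
            exact lt_add_of_pos_right _ this
          exact this)
      · have : (0:Ordinal) < 2 := by norm_num
        exact lt_add_of_pos_right _ this
    · rw [lix_limit hlim]
      have h1 : lix β + 1 ≤ lixSup α := Ordinal.le_bsup (fun γ _ => lix γ + 1) β hβα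
      exact lt_of_lt_of_le (lt_of_lt_of_le (lt_add_one _) h1) (le_of_lt (lt_add_one _))

lemma lix_mono {β α : Ordinal.{v}} (h : β ≤ α) : lix β ≤ lix α := by
  rcases lt_or_eq_of_le h with h1 | rfl
  · exact le_of_lt (lix_strictMono h1)
  · exact le_rfl

lemma lt_lix (α : Ordinal.{v}) : α < lix α := by
  induction α using Ordinal.induction with
  | h α IH =>
    rcases Ordinal.zero_or_succ_or_isSuccLimit α with rfl | ⟨α', rfl⟩ | hlim
    · simp
    · rw [← Ordinal.add_one_eq_succ] at *
      rw [lix_succ]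
      have h1 : α' < lix α' := IH α' (lt_add_one α')
      calc α' + 1 ≤ lix α' + 1 := by
            exact add_le_add_left (le_of_lt h1) 1
        _ < lix α' + 2 := by
            exact add_lt_add_right (by norm_num) _
    · rw [lix_limit hlim]
      have h1 : α ≤ lixSup α := by
        rw [hlim.le_iff_forall_le]
        intro x hx
        calc x ≤ lix x := le_of_lt (IH x hx)
          _ ≤ lix x + 1 := le_of_lt (lt_add_one _)
          _ ≤ lixSup α := Ordinal.le_bsup _ x hx
      exact lt_of_le_of_lt h1 (lt_add_one _)

lemma lixSup_isLimit {o : Ordinal.{v}} (h : Order.IsSuccLimit o) : Order.IsSuccLimit (lixSup o) := by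
  rw [Ordinal.isSuccLimit_iff]
  constructor
  · intro h0
    have h1 : lix 0 + 1 ≤ lixSup o := Ordinal.le_bsup _ 0 h.pos
    rw [h0] at h1
    simp at h1
  · apply Order.isSuccPrelimit_of_succ_lt
    intro a ha
    obtain ⟨γ, hγ, hlt⟩ := (Ordinal.lt_bsup _).mp ha
    have h1 : a ≤ lix γ := Order.lt_succ_iff.mp (by rwa [Ordinal.add_one_eq_succ] at hlt)
    have h2 : a + 1 ≤ lix γ + 1 := add_le_add_left h1 1
    have h3 : lix γ + 1 < lix (γ + 1) + 1 := by
      rw [lix_succ, add_assoc]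
      exact add_lt_add_right (by norm_num : (1:Ordinal) < 2 + 1) _
    have h4 : lix (γ + 1) + 1 ≤ lixSup o := Ordinal.le_bsup _ (γ + 1) (by
      rw [Ordinal.add_one_eq_succ]; exact h.succ_lt hγ)
    rw [← Ordinal.add_one_eq_succ]
    exact lt_of_le_of_lt h2 (lt_of_lt_of_le h3 h4)

lemma lix_odd : ∀ α : Ordinal.{v}, OrdOdd (lix α) := by
  intro α
  induction α using Ordinal.induction with
  | h α IH =>
    rcases Ordinal.zero_or_succ_or_isSuccLimit α with rfl | ⟨α', rfl⟩ | hlim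
    · rw [lix_zero]; exact ordOdd_one
    · rw [← Ordinal.add_one_eq_succ, lix_succ]
      exact (IH α' (lt_add_one α')).add_two
    · rw [lix_limit hlim]
      exact ordOdd_succ_of_limit (lixSup_isLimit hlim)

lemma lix_bound : ∀ α : Ordinal.{v}, lix α < ω * (α + 1) := by
  intro α
  induction α using Ordinal.induction with
  | h α IH =>
    rcases Ordinal.zero_or_succ_or_isSuccLimit α with rfl | ⟨α', rfl⟩ | hlim
    · rw [lix_zero, zero_add, mul_one]
      exact Ordinal.one_lt_omega0
    · rw [← Ordinal.add_one_eq_succ, lix_succ]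
      have h1 : lix α' < ω * (α' + 1) := IH α' (lt_add_one α')
      have h2 : lix α' + 2 < ω * (α' + 1) + ω := by
        calc lix α' + 2 ≤ ω * (α' + 1) + 2 := add_le_add_left h1.le 2
          _ < ω * (α' + 1) + ω := by
              refine add_lt_add_right ?_ _
              have : ((2:ℕ) : Ordinal) < ω := Ordinal.nat_lt_omega0 2
              simpa using this
      calc lix α' + 2 < ω * (α' + 1) + ω := h2
        _ = ω * (α' + 1 + 1) := by conv_rhs => rw [mul_add, mul_one]
    · rw [lix_limit hlim]
      have h1 : lixSup α ≤ ω * α := by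
        rw [lixSup, Ordinal.bsup_le_iff]
        intro γ hγ
        have h2 : lix γ + 1 ≤ ω * (γ + 1) := Order.add_one_le_of_lt (IH γ hγ)
        calc lix γ + 1 ≤ ω * (γ + 1) := h2
          _ ≤ ω * α := by
              apply mul_le_mul_right
              rw [Ordinal.add_one_eq_succ]
              exact (hlim.succ_lt hγ).le
      calc lixSup α + 1 ≤ ω * α + 1 := add_le_add_left h1 1
        _ < ω * α + ω := add_lt_add_right Ordinal.one_lt_omega0 _
        _ = ω * (α + 1) := by conv_rhs => rw [mul_add, mul_one]

lemma nat_not_isLimit (n : ℕ) : ¬ Order.IsSuccLimit (n : Ordinal.{v}) := by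
  intro h
  rcases n with _ | m
  · exact h.ne_zero (by norm_num)
  · have h1 : ((m : Ordinal) : Ordinal.{v}) < ((m + 1 : ℕ) : Ordinal) := by
      norm_cast
      omega
    have h2 := h.succ_lt h1
    rw [← Ordinal.add_one_eq_succ] at h2
    have h3 : ((m : Ordinal) + 1) = ((m + 1 : ℕ) : Ordinal.{v}) := by norm_cast
    rw [h3] at h2
    exact absurd h2 (lt_irrefl _)

lemma ord_succ_inj {a b : Ordinal.{v}} (h : a + 1 = b + 1) : a = b := by
  rw [Ordinal.add_one_eq_succ, Ordinal.add_one_eq_succ] at h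
  exact Order.succ_injective h

section Small

variable {P : Type u} [PartialOrder P] [OrderTop P]

open scoped Classical in
noncomputable def smallRun (σ : IncStrategy.{u, v} P) : Ordinal.{v} → P :=
  Ordinal.lt_wf.fix (fun α IH =>
    if _ : OrdOdd α then σ α (fun y hy => IH y hy)
    else if h2 : ∃ β, α = β + 1 then
      IH h2.choose (lt_of_lt_of_eq (lt_add_one _) h2.choose_spec.symm)
    else ⊤)

open scoped Classical in
lemma smallRun_def (σ : IncStrategy.{u, v} P) (α : Ordinal.{v}) :
    smallRun σ α =
      if _ : OrdOdd α then σ α (fun y _ => smallRun σ y)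
      else if h2 : ∃ β, α = β + 1 then smallRun σ h2.choose
      else ⊤ := by
  rw [smallRun, WellFounded.fix_eq]

lemma smallRun_zero (σ : IncStrategy.{u, v} P) : smallRun σ 0 = ⊤ := by
  rw [smallRun_def]
  rw [dif_neg not_ordOdd_zero, dif_neg]
  rintro ⟨β, hβ⟩
  have := Ordinal.add_eq_zero_iff.mp hβ.symm
  simp at this

lemma smallRun_odd (σ : IncStrategy.{u, v} P) {α : Ordinal.{v}} (h : OrdOdd α) :
    smallRun σ α = σ α (fun y _ => smallRun σ y) := by
  rw [smallRun_def, dif_pos h]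

lemma smallRun_even_succ (σ : IncStrategy.{u, v} P) {β : Ordinal.{v}} (h : ¬ OrdOdd (β + 1)) :
    smallRun σ (β + 1) = smallRun σ β := by
  rw [smallRun_def, dif_neg h, dif_pos ⟨β, rfl⟩]
  congr 1
  exact ord_succ_inj (Exists.choose_spec (⟨β, rfl⟩ : ∃ γ, β + 1 = γ + 1)).symm

lemma not_incWinning_small {σ : IncStrategy.{u, v} P} {δ : Ordinal.{v}} (hδ : δ ≤ ω)
    (hwin : IncWinning σ δ) : False := by
  have hdesc : ∀ γ, γ < δ → ∀ x, x ≤ γ → smallRun σ γ ≤ smallRun σ x := by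
    intro γ
    induction γ using Ordinal.induction with
    | h γ IH =>
      intro hγδ x hx
      rcases Ordinal.zero_or_succ_or_isSuccLimit γ with rfl | ⟨β, rfl⟩ | hlim
      · rw [nonpos_iff_eq_zero.mp hx]
      · rw [← Ordinal.add_one_eq_succ] at *
        rcases eq_or_lt_of_le hx with rfl | hxlt
        · exact le_rfl
        · have hxβ : x ≤ β := by
            rw [Ordinal.add_one_eq_succ] at hxlt
            exact Order.lt_succ_iff.mp hxlt
          by_cases hodd : OrdOdd (β + 1)
          · have hIF : IncFollows σ (β + 1) (fun y _ => smallRun σ y) := by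
              refine ⟨fun _ => smallRun_zero σ, ?_, ?_⟩
              · intro a b hab hb
                exact IH b hb (lt_trans hb hγδ) a hab
              · intro y hy hyodd
                exact smallRun_odd σ hyodd
            have h1 := hwin.1 (β + 1) hγδ hodd _ hIF x hxlt
            rw [smallRun_odd σ hodd]
            exact h1
          · rw [smallRun_even_succ σ hodd]
            rcases eq_or_lt_of_le hxβ with rfl | hxβ'
            · exact le_rfl
            · exact IH β (lt_add_one β) (lt_trans (lt_add_one β) hγδ) x hxβ
      · exfalso
        obtain ⟨n, rfl⟩ := Ordinal.lt_omega0.mp (lt_of_lt_of_le hγδ hδ)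
        exact nat_not_isLimit n hlim
  exact hwin.2 ⟨smallRun σ, smallRun_zero σ,
    fun β γ h1 h2 => hdesc γ h2 β h1,
    fun α _ hodd => smallRun_odd σ hodd⟩

end Small

section Main

variable {P : Type u} [PartialOrder P] [OrderTop P]

/-- The set of "good plays at level `α`" relative to a family of previous levels:
plays of length `lix α + 1` following `σ`, descending, starting at `⊤`, whose
restriction to every earlier level belongs to that level. -/
def GoodPlay (σ : IncStrategy.{u, v} P) (α : Ordinal.{v})
    (Hp : ∀ β, β < α → Set (Ordinal.{v} → P)) : Set (Ordinal.{v} → P) :=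
  { g | g 0 = ⊤ ∧
        (∀ x y, x ≤ y → y ≤ lix α → g y ≤ g x) ∧
        (∀ x, x ≤ lix α → OrdOdd x → g x = σ x (fun y _ => g y)) ∧
        ∀ β (hβ : β < α), ∃ s ∈ Hp β hβ, ∀ x, x ≤ lix β → s x = g x }

/-- A family of plays whose values at index `m` are pairwise incompatible. -/
def IsAnti (m : Ordinal.{v}) (F : Set (Ordinal.{v} → P)) : Prop :=
  ∀ s ∈ F, ∀ t ∈ F, s ≠ t → ∀ w : P, w ≤ s m → w ≤ t m → False

lemma exists_max_anti (m : Ordinal.{v}) (G : Set (Ordinal.{v} → P)) :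
    ∃ F, (F ⊆ G ∧ IsAnti m F) ∧
      ∀ F', F' ⊆ G → IsAnti m F' → F ⊆ F' → F' = F := by
  have hzorn : ∀ c ⊆ {F : Set (Ordinal.{v} → P) | F ⊆ G ∧ IsAnti m F},
      IsChain (· ⊆ ·) c → ∃ ub ∈ {F : Set (Ordinal.{v} → P) | F ⊆ G ∧ IsAnti m F},
        ∀ s ∈ c, s ⊆ ub := by
    intro c hc hchain
    refine ⟨⋃₀ c, ⟨?_, ?_⟩, fun s hs => Set.subset_sUnion_of_mem hs⟩
    · intro s hs
      obtain ⟨F, hFc, hsF⟩ := hs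
      exact (hc hFc).1 hsF
    · intro s hs t ht hst w hws hwt
      obtain ⟨F1, hF1c, hsF1⟩ := hs
      obtain ⟨F2, hF2c, htF2⟩ := ht
      rcases hchain.total hF1c hF2c with h12 | h21
      · exact (hc hF2c).2 s (h12 hsF1) t htF2 hst w hws hwt
      · exact (hc hF1c).2 s hsF1 t (h21 htF2) hst w hws hwt
  obtain ⟨F, hF⟩ := zorn_subset {F : Set (Ordinal.{v} → P) | F ⊆ G ∧ IsAnti m F} hzorn
  exact ⟨F, hF.1, fun F' h1 h2 h3 => subset_antisymm (hF.2 ⟨h1, h2⟩ h3) h3⟩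

/-- A choice of a maximal antichain of good plays. -/
noncomputable def maxAnti (m : Ordinal.{v}) (G : Set (Ordinal.{v} → P)) :
    Set (Ordinal.{v} → P) :=
  (exists_max_anti m G).choose

lemma maxAnti_subset (m : Ordinal.{v}) (G : Set (Ordinal.{v} → P)) : maxAnti m G ⊆ G :=
  (exists_max_anti m G).choose_spec.1.1

lemma maxAnti_anti (m : Ordinal.{v}) (G : Set (Ordinal.{v} → P)) : IsAnti m (maxAnti m G) :=
  (exists_max_anti m G).choose_spec.1.2

/-- Maximality: every good play is compatible (at index `m`) with a member of the
chosen maximal antichain. -/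
lemma maxAnti_max (m : Ordinal.{v}) (G : Set (Ordinal.{v} → P)) {g : Ordinal.{v} → P}
    (hg : g ∈ G) : ∃ s ∈ maxAnti m G, ∃ w : P, w ≤ g m ∧ w ≤ s m := by
  by_cases hmem : g ∈ maxAnti m G
  · exact ⟨g, hmem, g m, le_rfl, le_rfl⟩
  by_contra hno
  push_neg at hno
  have hbig : insert g (maxAnti m G) = maxAnti m G := by
    refine (exists_max_anti m G).choose_spec.2 _ ?_ ?_ (Set.subset_insert _ _)
    · intro s hs
      rcases hs with rfl | hs
      · exact hg
      · exact maxAnti_subset m G hs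
    · intro s hs t ht hst w hws hwt
      rcases hs with rfl | hs
      · rcases ht with rfl | ht
        · exact hst rfl
        · exact hno t ht w hws hwt
      · rcases ht with rfl | ht
        · exact hno s hs w hwt hws
        · exact maxAnti_anti m G s hs t ht hst w hws hwt
  exact hmem (hbig ▸ Set.mem_insert g _)

/-- The levels of the tree of plays. -/
noncomputable def Hlev (σ : IncStrategy.{u, v} P) : Ordinal.{v} → Set (Ordinal.{v} → P) :=
  Ordinal.lt_wf.fix (fun α IH => maxAnti (lix α) (GoodPlay σ α (fun β hβ => IH β hβ)))

lemma Hlev_eq (σ : IncStrategy.{u, v} P) (α : Ordinal.{v}) :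
    Hlev σ α = maxAnti (lix α) (GoodPlay σ α (fun β _ => Hlev σ β)) := by
  rw [Hlev, WellFounded.fix_eq]

lemma Hlev_subset (σ : IncStrategy.{u, v} P) (α : Ordinal.{v}) :
    Hlev σ α ⊆ GoodPlay σ α (fun β _ => Hlev σ β) := by
  rw [Hlev_eq]
  exact maxAnti_subset _ _

lemma Hlev_anti (σ : IncStrategy.{u, v} P) (α : Ordinal.{v}) :
    IsAnti (lix α) (Hlev σ α) := by
  rw [Hlev_eq]
  exact maxAnti_anti _ _

lemma Hlev_max (σ : IncStrategy.{u, v} P) (α : Ordinal.{v}) {g : Ordinal.{v} → P}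
    (hg : g ∈ GoodPlay σ α (fun β _ => Hlev σ β)) :
    ∃ s ∈ Hlev σ α, ∃ w : P, w ≤ g (lix α) ∧ w ≤ s (lix α) := by
  rw [Hlev_eq]
  exact maxAnti_max _ _ hg

end Main

section Main2

variable {P : Type u} [PartialOrder P] [OrderTop P]
variable {σ : IncStrategy.{u, v} P} {δ : Ordinal.{v}}

set_option linter.unusedSectionVars false

lemma extend_play (hwin : IncWinning σ δ)
    {m' : Ordinal.{v}} (hm'0 : m' ≠ 0) (hm'odd : ¬ OrdOdd m') (hm'1 : OrdOdd (m' + 1))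
    (hm'δ : m' + 1 < δ)
    (base : Ordinal.{v} → P) (c : P)
    (hb0 : base 0 = ⊤)
    (hbdesc : ∀ x y, x ≤ y → y < m' → base y ≤ base x)
    (hbodd : ∀ x, x < m' → OrdOdd x → base x = σ x (fun y _ => base y))
    (hc : ∀ x, x < m' → c ≤ base x) :
    ∃ g : Ordinal.{v} → P,
      (∀ x, x < m' → g x = base x) ∧ g m' = c ∧
      g 0 = ⊤ ∧
      (∀ x y, x ≤ y → y ≤ m' + 1 → g y ≤ g x) ∧
      (∀ x, x ≤ m' + 1 → OrdOdd x → g x = σ x (fun y _ => g y)) ∧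
      g (m' + 1) ≤ c := by
  classical
  set g1 : Ordinal.{v} → P := fun x => if x = m' then c else base x with hg1
  set resp : P := σ (m' + 1) (fun y _ => g1 y) with hresp
  set g : Ordinal.{v} → P := fun x => if x = m' + 1 then resp else g1 x with hg
  have hne1 : m' ≠ m' + 1 := ne_of_lt (lt_add_one m')
  have hsne0 : m' + 1 ≠ 0 := by
    intro h0
    have := Ordinal.add_eq_zero_iff.mp h0
    simpa using this.2
  have hgown : ∀ x, x < m' → g x = base x := by
    intro x hx
    have hx1 : x ≠ m' := ne_of_lt hx
    have hx2 : x ≠ m' + 1 := ne_of_lt (lt_trans hx (lt_add_one m'))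
    simp only [hg, hg1]
    rw [if_neg hx2, if_neg hx1]
  have hgm : g m' = c := by
    simp only [hg, hg1]
    rw [if_neg hne1]
    simp
  have hg1v : ∀ x, x ≤ m' → g x = g1 x := by
    intro x hx
    have hx2 : x ≠ m' + 1 := ne_of_lt (lt_of_le_of_lt hx (lt_add_one m'))
    simp only [hg]
    rw [if_neg hx2]
  have hg10 : g1 0 = ⊤ := by
    simp only [hg1]
    rw [if_neg (Ne.symm hm'0), hb0]
  have hg0 : g 0 = ⊤ := by
    rw [hg1v 0 zero_le, hg10]
  -- descending of g1 below m'+1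
  have hg1desc : ∀ x y, x ≤ y → y < m' + 1 → g1 y ≤ g1 x := by
    intro x y hxy hy
    have hy' : y ≤ m' := Order.lt_succ_iff.mp (by rwa [Ordinal.add_one_eq_succ] at hy)
    rcases eq_or_lt_of_le hy' with rfl | hylt
    · rcases eq_or_lt_of_le hxy with rfl | hxlt
      · exact le_rfl
      · have : g1 y = c := by simp only [hg1]; simp
        rw [this]
        have hx1 : x ≠ y := ne_of_lt hxlt
        simp only [hg1, if_neg hx1]
        exact hc x hxlt
    · have hx1 : x ≠ m' := ne_of_lt (lt_of_le_of_lt hxy hylt)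
      have hy1 : y ≠ m' := ne_of_lt hylt
      simp only [hg1, if_neg hx1, if_neg hy1]
      exact hbdesc x y hxy hylt
  -- g1 follows σ at odd stages below m'+1
  have hg1odd : ∀ x, x < m' + 1 → OrdOdd x → g1 x = σ x (fun y _ => g1 y) := by
    intro x hx hxodd
    have hx' : x ≤ m' := Order.lt_succ_iff.mp (by rwa [Ordinal.add_one_eq_succ] at hx)
    rcases eq_or_lt_of_le hx' with rfl | hxlt
    · exact absurd hxodd hm'odd
    · have hx1 : x ≠ m' := ne_of_lt hxlt
      have h1 : g1 x = base x := by simp only [hg1]; rw [if_neg hx1]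
      rw [h1, hbodd x hxlt hxodd]
      congr 1
      funext y hy
      have hy1 : y ≠ m' := ne_of_lt (lt_trans hy hxlt)
      simp only [hg1]
      rw [if_neg hy1]
  have hIF : IncFollows σ (m' + 1) (fun y _ => g1 y) := by
    refine ⟨fun _ => hg10, ?_, ?_⟩
    · intro a b hab hb
      exact hg1desc a b hab hb
    · intro y hy hyodd
      exact hg1odd y hy hyodd
  have hrle : ∀ y, y < m' + 1 → resp ≤ g1 y := by
    intro y hy
    exact hwin.1 (m' + 1) hm'δ hm'1 _ hIF y hy
  have hgtop : g (m' + 1) = resp := by simp only [hg]; simp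
  have hrespc : g (m' + 1) ≤ c := by
    rw [hgtop]
    have h2 : g1 m' = c := by simp only [hg1]; simp
    rw [← h2]
    exact hrle m' (lt_add_one m')
  refine ⟨g, hgown, hgm, hg0, ?_, ?_, hrespc⟩
  · -- descending
    intro x y hxy hy
    rcases eq_or_lt_of_le hy with rfl | hylt
    · rcases eq_or_lt_of_le hxy with rfl | hxlt
      · exact le_rfl
      · rw [hgtop]
        have hx' : x ≤ m' := Order.lt_succ_iff.mp (by rwa [Ordinal.add_one_eq_succ] at hxlt)
        rw [hg1v x hx']
        exact hrle x hxlt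
    · have hy' : y ≤ m' := Order.lt_succ_iff.mp (by rwa [Ordinal.add_one_eq_succ] at hylt)
      rw [hg1v y hy', hg1v x (le_trans hxy hy')]
      exact hg1desc x y hxy hylt
  · -- σ at odd stages
    intro x hx hxodd
    rcases eq_or_lt_of_le hx with rfl | hxlt
    · rw [hgtop, hresp]
      congr 1
      funext y hy
      have hy' : y ≤ m' := Order.lt_succ_iff.mp (by rwa [Ordinal.add_one_eq_succ] at hy)
      rw [hg1v y hy']
    · rw [hg1v x (Order.lt_succ_iff.mp (by rwa [Ordinal.add_one_eq_succ] at hxlt))]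
      rw [hg1odd x hxlt hxodd]
      congr 1
      funext y hy
      have hy' : y ≤ m' := le_of_lt (lt_of_lt_of_le hy (Order.lt_succ_iff.mp (by
        rwa [Ordinal.add_one_eq_succ] at hxlt)))
      rw [hg1v y hy']

end Main2

section Main3

variable {P : Type u} [PartialOrder P] [OrderTop P]

set_option linter.unusedSectionVars false

/-- `q` lies below the last entry of some level-`α` play. -/
def Alive (σ : IncStrategy.{u, v} P) (α : Ordinal.{v}) : Set P :=
  { q | ∃ s ∈ Hlev σ α, q ≤ s (lix α) }

noncomputable def Dset (σ : IncStrategy.{u, v} P) (α : Ordinal.{v}) : Set P :=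
  Alive σ α ∪ { q | ∀ w, w ≤ q → w ∉ Alive σ α }

lemma Dset_openDense (σ : IncStrategy.{u, v} P) (α : Ordinal.{v}) :
    OpenDense (Dset σ α) := by
  constructor
  · rintro p (⟨s, hs, hps⟩ | hdead) q hqp
    · exact Or.inl ⟨s, hs, le_trans hqp hps⟩
    · exact Or.inr (fun w hw => hdead w (le_trans hw hqp))
  · intro r
    by_cases hex : ∃ w, w ≤ r ∧ w ∈ Alive σ α
    · obtain ⟨w, hwr, hw⟩ := hex
      exact ⟨w, hwr, Or.inl hw⟩
    · push_neg at hex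
      exact ⟨r, le_rfl, Or.inr hex⟩

lemma main_false {σ : IncStrategy.{u, v} P} {κ : Cardinal.{v}}
    (hwin : IncWinning σ κ.ord) (hδpos : (0 : Ordinal.{v}) < κ.ord)
    (hcl : ∀ α, α < κ.ord → lix α < κ.ord)
    (hSD : StronglyDistrib κ P) : False := by
  classical
  -- the root play
  have hroot : ∃ g, g ∈ GoodPlay σ 0 (fun β _ => Hlev σ β) := by
    refine ⟨fun x => if x = 1 then σ 1 (fun _ _ => (⊤ : P)) else ⊤, ?_, ?_, ?_, ?_⟩
    · dsimp only
      rw [if_neg (by norm_num : (0 : Ordinal.{v}) ≠ 1)]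
    · intro x y hxy hy
      dsimp only
      rw [lix_zero] at hy
      by_cases hy1 : y = 1
      · subst hy1
        rcases Ordinal.le_one_iff.mp hxy with rfl | rfl
        · rw [if_pos rfl, if_neg (by norm_num : (0 : Ordinal.{v}) ≠ 1)]
          exact le_top
        · exact le_rfl
      · have hy0 : y = 0 := by
          rcases Ordinal.le_one_iff.mp hy with rfl | rfl
          · rfl
          · exact absurd rfl hy1
        subst hy0
        have hx0 : x = 0 := nonpos_iff_eq_zero.mp hxy
        subst hx0
        exact le_rfl
    · intro x hx hxodd
      dsimp only
      rw [lix_zero] at hx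
      rcases Ordinal.le_one_iff.mp hx with rfl | rfl
      · exact absurd hxodd not_ordOdd_zero
      · rw [if_pos rfl]
        congr 1
        funext y hy
        have hy0 : y = 0 := Ordinal.lt_one_iff_zero.mp hy
        subst hy0
        rw [if_neg (by norm_num : (0 : Ordinal.{v}) ≠ 1)]
    · intro β hβ
      exact absurd hβ not_lt_zero
  obtain ⟨g₀, hg₀⟩ := hroot
  obtain ⟨s₀, hs₀, w₀, hw₀g, hw₀s⟩ := Hlev_max σ 0 hg₀
  -- the thread
  obtain ⟨f, hf0, hfdesc, hfD⟩ := hSD (Dset σ) (fun α _ => Dset_openDense σ α) (s₀ (lix 0))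
  -- coherence of witnesses
  have hnest : ∀ {β α : Ordinal.{v}}, β < α → α < κ.ord →
      ∀ s ∈ Hlev σ α, f α ≤ s (lix α) → ∀ t ∈ Hlev σ β, f β ≤ t (lix β) →
      ∀ x, x ≤ lix β → t x = s x := by
    intro β α hβα hαδ s hsmem hfs t htmem hft x hx
    obtain ⟨s', hs', hagree⟩ := (Hlev_subset σ α hsmem).2.2.2 β hβα
    have hw1 : f α ≤ s' (lix β) := by
      rw [hagree (lix β) le_rfl]
      exact le_trans hfs ((Hlev_subset σ α hsmem).2.1 (lix β) (lix α)
        (lix_mono hβα.le) le_rfl)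
    have hw2 : f α ≤ t (lix β) := le_trans (hfdesc β α hβα.le hαδ) hft
    by_cases hst : s' = t
    · rw [← hst, hagree x hx]
    · exact absurd (Hlev_anti σ β s' hs' t htmem hst (f α) hw1 hw2) not_false
  -- every thread value is below a witness on its level
  have hTh : ∀ α, α < κ.ord → ∃ s ∈ Hlev σ α, f α ≤ s (lix α) := by
    intro α
    induction α using Ordinal.induction with
    | h α IH =>
      intro hαδ
      have halive : (∃ w, w ≤ f α ∧ w ∈ Alive σ α) → ∃ s ∈ Hlev σ α, f α ≤ s (lix α) := by
        intro hw
        rcases hfD α hαδ with hA | hDead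
        · exact hA
        · exfalso
          obtain ⟨w, hw1, hw2⟩ := hw
          exact hDead w hw1 hw2
      apply halive
      rcases Ordinal.zero_or_succ_or_isSuccLimit α with rfl | ⟨β, rfl⟩ | hlim
      · exact ⟨f 0, le_rfl, s₀, hs₀, hf0⟩
      · -- successor case
        rw [← Ordinal.add_one_eq_succ] at *
        have hβδ : β < κ.ord := lt_trans (lt_add_one β) hαδ
        obtain ⟨sβ, hsβ, hfβ⟩ := IH β (lt_add_one β) hβδ
        have hGP := Hlev_subset σ β hsβ
        have hlixsucc : lix (β + 1) = (lix β + 1) + 1 := by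
          rw [lix_succ, add_assoc]
          norm_num
        have hoddm1 : OrdOdd ((lix β + 1) + 1) := by
          rw [← hlixsucc]
          exact lix_odd (β + 1)
        obtain ⟨g, hgbase, hgm, hg0, hgdesc, hgodd, hgle⟩ :=
          extend_play hwin (m' := lix β + 1)
            (by
              intro h0
              exact absurd (Ordinal.add_eq_zero_iff.mp h0).2 (by norm_num))
            (lix_odd β).not_succ hoddm1
            (by rw [← hlixsucc]; exact hcl (β + 1) hαδ)
            sβ (f (β + 1))
            hGP.1
            (fun x y hxy hy => hGP.2.1 x y hxy (Order.lt_succ_iff.mp (by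
              rwa [Ordinal.add_one_eq_succ] at hy)))
            (fun x hx hxodd => hGP.2.2.1 x (Order.lt_succ_iff.mp (by
              rwa [Ordinal.add_one_eq_succ] at hx)) hxodd)
            (by
              intro x hx
              have hx' : x ≤ lix β := Order.lt_succ_iff.mp (by
                rwa [Ordinal.add_one_eq_succ] at hx)
              calc f (β + 1) ≤ f β := hfdesc β (β + 1) (lt_add_one β).le hαδ
                _ ≤ sβ (lix β) := hfβ
                _ ≤ sβ x := hGP.2.1 x (lix β) hx' le_rfl)
        have hgGP : g ∈ GoodPlay σ (β + 1) (fun β' _ => Hlev σ β') := by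
          refine ⟨hg0, ?_, ?_, ?_⟩
          · intro x y hxy hy
            rw [hlixsucc] at hy
            exact hgdesc x y hxy hy
          · intro x hx hxodd
            rw [hlixsucc] at hx
            exact hgodd x hx hxodd
          · intro β' hβ'
            have hβ'β : β' ≤ β := Order.lt_succ_iff.mp (by
              rwa [Ordinal.add_one_eq_succ] at hβ')
            rcases eq_or_lt_of_le hβ'β with rfl | hβ'lt
            · refine ⟨sβ, hsβ, ?_⟩
              intro x hx
              rw [hgbase x (lt_of_le_of_lt hx (lt_add_one _))]
            · obtain ⟨s', hs', ha⟩ := hGP.2.2.2 β' hβ'lt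
              refine ⟨s', hs', ?_⟩
              intro x hx
              rw [ha x hx, hgbase x (lt_of_le_of_lt (le_trans hx (lix_mono hβ'lt.le))
                (lt_add_one _))]
        obtain ⟨s, hs, w, hw1, hw2⟩ := Hlev_max σ (β + 1) hgGP
        refine ⟨w, ?_, s, hs, hw2⟩
        calc w ≤ g (lix (β + 1)) := hw1
          _ = g ((lix β + 1) + 1) := by rw [hlixsucc]
          _ ≤ f (β + 1) := hgle
      · -- limit case
        have hW : ∀ γ (hγ : γ < α), ∃ s ∈ Hlev σ γ, f γ ≤ s (lix γ) :=
          fun γ hγ => IH γ hγ (lt_trans hγ hαδ)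
        set W : ∀ γ, γ < α → (Ordinal.{v} → P) := fun γ hγ => (hW γ hγ).choose with hWdef
        have hWmem : ∀ γ hγ, W γ hγ ∈ Hlev σ γ := fun γ hγ => (hW γ hγ).choose_spec.1
        have hWf : ∀ γ hγ, f γ ≤ W γ hγ (lix γ) := fun γ hγ => (hW γ hγ).choose_spec.2
        have hWGP : ∀ γ hγ, W γ hγ ∈ GoodPlay σ γ (fun β _ => Hlev σ β) :=
          fun γ hγ => Hlev_subset σ γ (hWmem γ hγ)
        have hWnest : ∀ γ γ' (hγ : γ < α) (hγ' : γ' < α), γ ≤ γ' →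
            ∀ x, x ≤ lix γ → W γ hγ x = W γ' hγ' x := by
          intro γ γ' hγ hγ' hle x hx
          rcases eq_or_lt_of_le hle with rfl | hlt
          · rfl
          · exact hnest hlt (lt_trans hγ' hαδ) (W γ' hγ') (hWmem γ' hγ') (hWf γ' hγ')
              (W γ hγ) (hWmem γ hγ) (hWf γ hγ) x hx
        have hΛlim : Order.IsSuccLimit (lixSup α) := lixSup_isLimit hlim
        have hpick : ∀ x, x < lixSup α → ∃ γ, ∃ hγ : γ < α, x ≤ lix γ := by
          intro x hx
          obtain ⟨γ, hγ, hlt⟩ := (Ordinal.lt_bsup _).mp hx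
          exact ⟨γ, hγ, Order.lt_succ_iff.mp (by rwa [Ordinal.add_one_eq_succ] at hlt)⟩
        set u : Ordinal.{v} → P := fun x =>
          if h : x < lixSup α then
            W (hpick x h).choose (hpick x h).choose_spec.choose x
          else ⊤ with hudef
        have hu : ∀ γ (hγ : γ < α), ∀ x, x ≤ lix γ → u x = W γ hγ x := by
          intro γ hγ x hx
          have hxΛ : x < lixSup α := lt_of_le_of_lt hx (lt_of_lt_of_le (lt_add_one _)
            (Ordinal.le_bsup _ γ hγ))
          simp only [hudef, dif_pos hxΛ]
          set γ₀ := (hpick x hxΛ).choose with hγ₀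
          have hγ₀α : γ₀ < α := (hpick x hxΛ).choose_spec.choose
          have hxγ₀ : x ≤ lix γ₀ := (hpick x hxΛ).choose_spec.choose_spec
          rcases le_total γ₀ γ with h1 | h1
          · exact hWnest γ₀ γ hγ₀α hγ h1 x hxγ₀
          · exact (hWnest γ γ₀ hγ hγ₀α h1 x hx).symm
        -- properties of u as a base play
        have hu0 : u 0 = ⊤ := by
          have h0γ : (0 : Ordinal.{v}) ≤ lix 0 := le_of_lt (by rw [lix_zero]; norm_num)
          rw [hu 0 hlim.pos 0 h0γ]
          exact (hWGP 0 hlim.pos).1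
        have hudesc : ∀ x y, x ≤ y → y < lixSup α → u y ≤ u x := by
          intro x y hxy hy
          obtain ⟨γ, hγ, hyγ⟩ := hpick y hy
          rw [hu γ hγ y hyγ, hu γ hγ x (le_trans hxy hyγ)]
          exact (hWGP γ hγ).2.1 x y hxy hyγ
        have huodd : ∀ x, x < lixSup α → OrdOdd x → u x = σ x (fun y _ => u y) := by
          intro x hx hxodd
          obtain ⟨γ, hγ, hxγ⟩ := hpick x hx
          rw [hu γ hγ x hxγ, (hWGP γ hγ).2.2.1 x hxγ hxodd]
          congr 1
          funext y hy
          rw [hu γ hγ y (le_trans hy.le hxγ)]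
        have huc : ∀ x, x < lixSup α → f α ≤ u x := by
          intro x hx
          obtain ⟨γ, hγ, hxγ⟩ := hpick x hx
          rw [hu γ hγ x hxγ]
          calc f α ≤ f γ := hfdesc γ α hγ.le hαδ
            _ ≤ W γ hγ (lix γ) := hWf γ hγ
            _ ≤ W γ hγ x := (hWGP γ hγ).2.1 x (lix γ) hxγ le_rfl
        have hlixα : lix α = lixSup α + 1 := lix_limit hlim
        obtain ⟨g, hgbase, hgm, hg0, hgdesc, hgodd, hgle⟩ :=
          extend_play hwin (m' := lixSup α) hΛlim.ne_zero (not_ordOdd_limit hΛlim)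
            (ordOdd_succ_of_limit hΛlim)
            (by rw [← hlixα]; exact hcl α hαδ)
            u (f α) hu0 hudesc huodd huc
        have hgGP : g ∈ GoodPlay σ α (fun β' _ => Hlev σ β') := by
          refine ⟨hg0, ?_, ?_, ?_⟩
          · intro x y hxy hy
            rw [hlixα] at hy
            exact hgdesc x y hxy hy
          · intro x hx hxodd
            rw [hlixα] at hx
            exact hgodd x hx hxodd
          · intro β' hβ'
            refine ⟨W β' hβ', hWmem β' hβ', ?_⟩
            intro x hx
            have hxΛ : x < lixSup α := lt_of_le_of_lt hx (lt_of_lt_of_le (lt_add_one _)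
              (Ordinal.le_bsup _ β' hβ'))
            rw [hgbase x hxΛ, hu β' hβ' x hx]
        obtain ⟨s, hs, w, hw1, hw2⟩ := Hlev_max σ α hgGP
        refine ⟨w, ?_, s, hs, hw2⟩
        calc w ≤ g (lix α) := hw1
          _ = g (lixSup α + 1) := by rw [hlixα]
          _ ≤ f α := hgle
  -- assemble the full run, contradicting clause (ii) of `IncWinning`
  set Fw : ∀ β, β < κ.ord → (Ordinal.{v} → P) := fun β hβ => (hTh β hβ).choose with hFwdef
  have hFwmem : ∀ β hβ, Fw β hβ ∈ Hlev σ β := fun β hβ => (hTh β hβ).choose_spec.1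
  have hFwf : ∀ β hβ, f β ≤ Fw β hβ (lix β) := fun β hβ => (hTh β hβ).choose_spec.2
  have hFwGP : ∀ β hβ, Fw β hβ ∈ GoodPlay σ β (fun γ _ => Hlev σ γ) :=
    fun β hβ => Hlev_subset σ β (hFwmem β hβ)
  have hFwnest : ∀ β γ (hβ : β < κ.ord) (hγ : γ < κ.ord), β ≤ γ →
      ∀ x, x ≤ lix β → Fw β hβ x = Fw γ hγ x := by
    intro β γ hβ hγ hle x hx
    rcases eq_or_lt_of_le hle with rfl | hlt
    · rfl
    · exact hnest hlt hγ (Fw γ hγ) (hFwmem γ hγ) (hFwf γ hγ)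
        (Fw β hβ) (hFwmem β hβ) (hFwf β hβ) x hx
  set F : Ordinal.{v} → P := fun β => if h : β < κ.ord then Fw β h β else ⊤ with hFdef
  have hFval : ∀ β (hβ : β < κ.ord), F β = Fw β hβ β := by
    intro β hβ
    simp only [hFdef, dif_pos hβ]
  refine hwin.2 ⟨F, ?_, ?_, ?_⟩
  · rw [hFval 0 hδpos]
    exact (hFwGP 0 hδpos).1
  · intro β γ hβγ hγ
    have hβ : β < κ.ord := lt_of_le_of_lt hβγ hγ
    rw [hFval γ hγ, hFval β hβ, hFwnest β γ hβ hγ hβγ β (lt_lix β).le]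
    exact (hFwGP γ hγ).2.1 β γ hβγ (lt_lix γ).le
  · intro α hα hodd
    rw [hFval α hα, (hFwGP α hα).2.2.1 α (lt_lix α).le hodd]
    congr 1
    funext y hy
    rw [hFval y (lt_trans hy hα), hFwnest y α (lt_trans hy hα) hα hy.le y (lt_lix y).le]

end Main3

/-- If INC has a winning strategy in the completeness game `G(P, κ)` on a partial
order `P` with greatest element, then `P` is not strongly `<κ`-distributive. -/
theorem not_stronglyDistrib_of_incWinning {P : Type u} [PartialOrder P] [OrderTop P]
    (κ : Cardinal.{v}) (h : ∃ σ : IncStrategy.{u, v} P, IncWinning σ κ.ord) :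
    ¬ StronglyDistrib κ P := by
  intro hSD
  obtain ⟨σ, hwin⟩ := h
  rcases le_or_gt κ.ord ω with hsmall | hbig
  · exact not_incWinning_small hsmall hwin
  · have hℵ : Cardinal.aleph0.{v} < κ := by
      rw [← Cardinal.ord_lt_ord, Cardinal.ord_aleph0]
      exact hbig
    have hδpos : (0 : Ordinal.{v}) < κ.ord := lt_trans Ordinal.omega0_pos hbig
    have hcl : ∀ α, α < κ.ord → lix α < κ.ord := by
      intro α hα
      have h1 : lix α < ω * (α + 1) := lix_bound α
      have h2 : ω * (α + 1) < κ.ord := by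
        rw [Cardinal.lt_ord, Ordinal.card_mul, Ordinal.card_omega0, Ordinal.card_add,
          Ordinal.card_one]
        apply Cardinal.mul_lt_of_lt hℵ.le hℵ
        apply Cardinal.add_lt_of_lt hℵ.le
        · exact Cardinal.lt_ord.mp hα
        · exact lt_trans Cardinal.one_lt_aleph0 hℵ
      exact lt_trans h1 h2
    exact main_false hwin hδpos hcl hSD
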